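/- Let \hat{P}, \hat{P}_a, \hat{P}_b be mutually independent real-valued random variables on a common probability space with positive means, such that \hat{P} is square-integrable, \hat{P}_a and \hat{P}_b are integrable, and the products \hat{P}\hat{P}_a, \hat{P}\hat{P}_b and \hat{P}^2 \hat{P}_a \hat{P}_b are integrable. Define \hat{P}_1 = \hat{P}\hat{P}_a and \hat{P}_2 = \hat{P}\hat{P}_b. Then Cov(\hat{P}_1, \hat{P}_2) / (E[\hat{P}_1] E[\hat{P}_2]) = Var(\hat{P}) / E[\hat{P}]^2. -/

import Mathlib

open MeasureTheory ProbabilityTheory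

/-- Proposition A.3: if `P̂₁ = P̂ P̂ₐ` and `P̂₂ = P̂ P̂_b` where `P̂, P̂ₐ, P̂_b` are
mutually independent with positive means, then
`Cov(P̂₁, P̂₂)/(E[P̂₁] E[P̂₂]) = Var(P̂)/E[P̂]²` (i.e. `δ₁ δ₂ ρ = δ²`). -/
theorem common_factor_cov_identity
    {Ω : Type*} [MeasurableSpace Ω] (μ : Measure Ω) [IsProbabilityMeasure μ]
    (Phat Pa Pb : Ω → ℝ)
    (hPhat : Measurable Phat) (hPa : Measurable Pa) (hPb : Measurable Pb)
    (hIndep : iIndepFun ![Phat, Pa, Pb] μ)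
    (hMeanPhat : 0 < ∫ ω, Phat ω ∂μ)
    (hMeanPa : 0 < ∫ ω, Pa ω ∂μ)
    (hMeanPb : 0 < ∫ ω, Pb ω ∂μ)
    (hL2 : MemLp Phat 2 μ)
    (hIntPa : Integrable Pa μ) (hIntPb : Integrable Pb μ)
    (hInt1 : Integrable (fun ω => Phat ω * Pa ω) μ)
    (hInt2 : Integrable (fun ω => Phat ω * Pb ω) μ)
    (hInt12 : Integrable (fun ω => (Phat ω) ^ 2 * Pa ω * Pb ω) μ) :
    ((∫ ω, (Phat ω * Pa ω) * (Phat ω * Pb ω) ∂μ) -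
        (∫ ω, Phat ω * Pa ω ∂μ) * (∫ ω, Phat ω * Pb ω ∂μ)) /
      ((∫ ω, Phat ω * Pa ω ∂μ) * (∫ ω, Phat ω * Pb ω ∂μ)) =
    ((∫ ω, (Phat ω) ^ 2 ∂μ) - (∫ ω, Phat ω ∂μ) ^ 2) / (∫ ω, Phat ω ∂μ) ^ 2 := by
  have hmeas : ∀ i, Measurable (![Phat, Pa, Pb] i) := by
    intro i; fin_cases i <;> assumption
  have h01 : IndepFun Phat Pa μ := hIndep.indepFun (i := 0) (j := 1) (by decide)
  have h02 : IndepFun Phat Pb μ := hIndep.indepFun (i := 0) (j := 2) (by decide)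
  have h12 : IndepFun Pa Pb μ := hIndep.indepFun (i := 1) (j := 2) (by decide)
  have hPPab : IndepFun (Phat * Phat) (Pa * Pb) μ :=
    hIndep.indepFun_mul_mul hmeas 0 0 1 2 (by decide) (by decide) (by decide) (by decide)
  have e1 : (∫ ω, Phat ω * Pa ω ∂μ) = (∫ ω, Phat ω ∂μ) * (∫ ω, Pa ω ∂μ) :=
    h01.integral_fun_mul_eq_mul_integral hPhat.aestronglyMeasurable hPa.aestronglyMeasurable
  have e2 : (∫ ω, Phat ω * Pb ω ∂μ) = (∫ ω, Phat ω ∂μ) * (∫ ω, Pb ω ∂μ) :=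
    h02.integral_fun_mul_eq_mul_integral hPhat.aestronglyMeasurable hPb.aestronglyMeasurable
  have e12 : (∫ ω, Pa ω * Pb ω ∂μ) = (∫ ω, Pa ω ∂μ) * (∫ ω, Pb ω ∂μ) :=
    h12.integral_fun_mul_eq_mul_integral hPa.aestronglyMeasurable hPb.aestronglyMeasurable
  have key : (∫ ω, (Phat * Phat) ω * (Pa * Pb) ω ∂μ)
      = (∫ ω, (Phat * Phat) ω ∂μ) * (∫ ω, (Pa * Pb) ω ∂μ) :=
    hPPab.integral_fun_mul_eq_mul_integral (hPhat.mul hPhat).aestronglyMeasurable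
      (hPa.mul hPb).aestronglyMeasurable
  have ePP : (∫ ω, (Phat * Phat) ω ∂μ) = ∫ ω, (Phat ω) ^ 2 ∂μ := by
    apply integral_congr_ae; filter_upwards with ω; simp [Pi.mul_apply, sq]
  have ePab : (∫ ω, (Pa * Pb) ω ∂μ) = ∫ ω, Pa ω * Pb ω ∂μ := by
    apply integral_congr_ae; filter_upwards with ω; simp [Pi.mul_apply]
  have e3 : (∫ ω, (Phat ω * Pa ω) * (Phat ω * Pb ω) ∂μ)
      = (∫ ω, (Phat ω) ^ 2 ∂μ) * ((∫ ω, Pa ω ∂μ) * (∫ ω, Pb ω ∂μ)) := by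
    have h : (∫ ω, (Phat ω * Pa ω) * (Phat ω * Pb ω) ∂μ)
        = ∫ ω, (Phat * Phat) ω * (Pa * Pb) ω ∂μ := by
      apply integral_congr_ae; filter_upwards with ω
      simp only [Pi.mul_apply]; ring
    rw [h, key, ePP, ePab, e12]
  rw [e1, e2, e3]
  have ha := hMeanPa.ne'
  have hb := hMeanPb.ne'
  have hp := hMeanPhat.ne'
  field_simp
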